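/- Define the finite-horizon optimal value functions by backward induction: V_H(x; r) = R(x; r) and, for 0 ≤ h < H, V_h(x; r) = max_{a∈A} ( R_h(x, a; r) + γ · ∑_{x'} P(x'|x,a) · V_{h+1}(x'; r) ), where A is a nonempty finite action set, states form a finite set X, 0 ≤ γ, P(·|x,a) is a sub-probability kernel (nonnegative, summing to at most 1), and the reward at step h depends on a parameter vector r only through the single value r(x⁰, a⁰) at one fixed state–action pair (x⁰, a⁰) appearing at step h₀. Suppose two reward parameters r₁, r₂ differ only at (x⁰, a⁰) with r₁(x⁰,a⁰) ≥ r₂(x⁰,a⁰). Then for every step h ≤ h₀ and every state x, 0 ≤ V_h(x; r₁) − V_h(x; r₂) ≤ γ^{h₀ − h} · (r₁(x⁰,a⁰) − r₂(x⁰,a⁰)). -/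
import Mathlib

lemma sup'_diff_bound {A : Type*} [Fintype A] [Nonempty A] (f g : A → ℝ) (c : ℝ)
    (h : ∀ a, 0 ≤ f a - g a ∧ f a - g a ≤ c) :
    0 ≤ Finset.univ.sup' Finset.univ_nonempty f - Finset.univ.sup' Finset.univ_nonempty g ∧
      Finset.univ.sup' Finset.univ_nonempty f - Finset.univ.sup' Finset.univ_nonempty g ≤ c := by
  constructor
  · rw [sub_nonneg]
    apply Finset.sup'_le
    intro a _
    exact le_trans (by linarith [(h a).1]) (Finset.le_sup' f (Finset.mem_univ a))
  · rw [sub_le_iff_le_add]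
    apply Finset.sup'_le
    intro a _
    have := Finset.le_sup' g (Finset.mem_univ a)
    linarith [(h a).2]

theorem value_perturbation_single_reward
    {X A : Type*} [Fintype X] [Fintype A] [Nonempty A]
    (H : ℕ) (γ : ℝ) (hγ0 : 0 ≤ γ) (hγ1 : γ ≤ 1)
    (P : X → A → X → ℝ)
    (hP0 : ∀ x a x', 0 ≤ P x a x')
    (hPsum : ∀ x a, ∑ x', P x a x' ≤ 1)
    (R : ℕ → X → A → (X → A → ℝ) → ℝ)
    (Vterm : X → ℝ)
    (x0 : X) (a0 : A) (h₀ : ℕ) (hh₀ : h₀ < H)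
    (hRdep : ∀ r, R h₀ x0 a0 r = r x0 a0)
    (hRindep : ∀ h x a, ¬(h = h₀ ∧ x = x0 ∧ a = a0) → ∀ r r', R h x a r = R h x a r')
    (V : ℕ → (X → A → ℝ) → X → ℝ)
    (hVH : ∀ r x, V H r x = Vterm x)
    (hVrec : ∀ h, h < H → ∀ r x,
      V h r x = Finset.univ.sup' Finset.univ_nonempty
        (fun a => R h x a r + γ * ∑ x', P x a x' * V (h + 1) r x'))
    (r₁ r₂ : X → A → ℝ)
    (hr : r₂ x0 a0 ≤ r₁ x0 a0)
    (hr_eq : ∀ x a, ¬(x = x0 ∧ a = a0) → r₁ x a = r₂ x a) :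
    ∀ h ≤ h₀, ∀ x,
      0 ≤ V h r₁ x - V h r₂ x ∧
      V h r₁ x - V h r₂ x ≤ γ ^ (h₀ - h) * (r₁ x0 a0 - r₂ x0 a0) := by
  set δ := r₁ x0 a0 - r₂ x0 a0 with hδdef
  have hδ : 0 ≤ δ := by simp [hδdef]; linarith
  -- For steps strictly after h₀, the value functions coincide.
  have eq_above : ∀ k h, H ≤ h + k → h₀ < h → h ≤ H → ∀ x, V h r₁ x = V h r₂ x := by
    intro k
    induction k with
    | zero =>
      intro h hk hh hhH x
      have : h = H := le_antisymm hhH (by omega)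
      subst this
      rw [hVH, hVH]
    | succ k ih =>
      intro h hk hh hhH x
      rcases eq_or_lt_of_le hhH with he | hlt
      · subst he; rw [hVH, hVH]
      · rw [hVrec h hlt, hVrec h hlt]
        apply Finset.sup'_congr _ rfl
        intro a _
        have hR : R h x a r₁ = R h x a r₂ := hRindep h x a (by omega) r₁ r₂
        have hsum : ∀ x', V (h + 1) r₁ x' = V (h + 1) r₂ x' :=
          ih (h + 1) (by omega) (by omega) (by omega)
        rw [hR]
        congr 1
        refine congrArg _ (Finset.sum_congr rfl fun x' _ => by rw [hsum x'])
  -- Main downward induction.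
  have main : ∀ d h, h + d = h₀ → ∀ x,
      0 ≤ V h r₁ x - V h r₂ x ∧ V h r₁ x - V h r₂ x ≤ γ ^ d * δ := by
    intro d
    induction d with
    | zero =>
      intro h hd x
      have hh : h₀ = h := by omega
      subst hh
      rw [hVrec h₀ hh₀, hVrec h₀ hh₀]
      simpa using sup'_diff_bound _ _ δ (by
        intro a
        have hsum : (∑ x', P x a x' * V (h₀ + 1) r₁ x') = ∑ x', P x a x' * V (h₀ + 1) r₂ x' :=
          Finset.sum_congr rfl fun x' _ => by
            rw [eq_above (H - (h₀ + 1)) (h₀ + 1) (by omega) (by omega) (by omega)]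
        by_cases hxa : x = x0 ∧ a = a0
        · obtain ⟨hx, ha⟩ := hxa; subst hx; subst ha
          rw [hRdep, hRdep, hsum]
          constructor <;> simp [δ] <;> linarith
        · rw [hRindep h₀ x a (by tauto) r₁ r₂, hsum]
          constructor <;> simp [hδ])
    | succ d ih =>
      intro h hd x
      have hhH : h < H := by omega
      rw [hVrec h hhH, hVrec h hhH]
      apply sup'_diff_bound
      intro a
      have hR : R h x a r₁ = R h x a r₂ := hRindep h x a (by omega) r₁ r₂
      have hbd : ∀ x', 0 ≤ V (h + 1) r₁ x' - V (h + 1) r₂ x' ∧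
          V (h + 1) r₁ x' - V (h + 1) r₂ x' ≤ γ ^ d * δ := ih (h + 1) (by omega)
      have hdiff : (∑ x', P x a x' * V (h + 1) r₁ x') - (∑ x', P x a x' * V (h + 1) r₂ x')
          = ∑ x', P x a x' * (V (h + 1) r₁ x' - V (h + 1) r₂ x') := by
        rw [← Finset.sum_sub_distrib]
        exact Finset.sum_congr rfl fun x' _ => by ring
      have h1 : 0 ≤ ∑ x', P x a x' * (V (h + 1) r₁ x' - V (h + 1) r₂ x') :=
        Finset.sum_nonneg fun x' _ => mul_nonneg (hP0 x a x') (hbd x').1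
      have h2 : (∑ x', P x a x' * (V (h + 1) r₁ x' - V (h + 1) r₂ x')) ≤ γ ^ d * δ := by
        calc (∑ x', P x a x' * (V (h + 1) r₁ x' - V (h + 1) r₂ x'))
            ≤ ∑ x', P x a x' * (γ ^ d * δ) :=
              Finset.sum_le_sum fun x' _ =>
                mul_le_mul_of_nonneg_left (hbd x').2 (hP0 x a x')
          _ = (∑ x', P x a x') * (γ ^ d * δ) := by rw [← Finset.sum_mul]
          _ ≤ 1 * (γ ^ d * δ) := by
              apply mul_le_mul_of_nonneg_right (hPsum x a)
              positivity
          _ = γ ^ d * δ := one_mul _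
      constructor
      · have : (R h x a r₁ + γ * ∑ x', P x a x' * V (h + 1) r₁ x') -
            (R h x a r₂ + γ * ∑ x', P x a x' * V (h + 1) r₂ x')
            = γ * (∑ x', P x a x' * (V (h + 1) r₁ x' - V (h + 1) r₂ x')) := by
          rw [hR, ← hdiff]; ring
        rw [this]
        exact mul_nonneg hγ0 h1
      · have : (R h x a r₁ + γ * ∑ x', P x a x' * V (h + 1) r₁ x') -
            (R h x a r₂ + γ * ∑ x', P x a x' * V (h + 1) r₂ x')
            = γ * (∑ x', P x a x' * (V (h + 1) r₁ x' - V (h + 1) r₂ x')) := by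
          rw [hR, ← hdiff]; ring
        rw [this, pow_succ, mul_comm (γ ^ d) γ, mul_assoc]
        exact mul_le_mul_of_nonneg_left h2 hγ0
  intro h hh x
  have := main (h₀ - h) h (by omega) x
  simpa using this
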